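/- Suppose F is bounded, μ is a finite Borel measure on E invariant under the flow (μ (f t ⁻¹' A) = μ A for every t ∈ ℝ and every Borel set A), and η : E → ℝ is C¹ with bounded derivative. Then ∫ Dη(x)(F x) dμ(x) = 0; that is, the average of the derivative of η along the flow direction vanishes against any invariant measure. -/

import Mathlib

open MeasureTheory Set Filter Topology

/-- `ρ(F(η)) = 0`.
If `F` is bounded, `μ` is a finite Borel measure invariant under the flow of `F`,
and `η : E → ℝ` is C¹ with bounded derivative, then
`∫ Dη(x)(F x) dμ(x) = 0`. -/
theorem equivariant_divergence_stmt6
    {E : Type*} [NormedAddCommGroup E] [NormedSpace ℝ E] [FiniteDimensional ℝ E]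
    [MeasurableSpace E] [BorelSpace E]
    (F : E → E) (hF : ContDiff ℝ 2 F)
    (hFbdd : ∃ C : ℝ, ∀ x : E, ‖F x‖ ≤ C)
    (f : ℝ → E → E)
    (hf0 : ∀ x : E, f 0 x = x)
    (hfadd : ∀ s t : ℝ, ∀ x : E, f (s + t) x = f s (f t x))
    (hflow : ∀ t : ℝ, ∀ x : E, HasDerivAt (fun τ : ℝ => f τ x) (F (f t x)) t)
    (μ : Measure E) [IsFiniteMeasure μ]
    (hinv : ∀ t : ℝ, ∀ A : Set E, MeasurableSet A → μ (f t ⁻¹' A) = μ A)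
    (η : E → ℝ) (hη : ContDiff ℝ 1 η)
    (hηbdd : ∃ C : ℝ, ∀ x : E, ‖fderiv ℝ η x‖ ≤ C) :
    ∫ x, fderiv ℝ η x (F x) ∂μ = 0 := by
  obtain ⟨CF, hCF⟩ := hFbdd
  obtain ⟨Cη, hCη⟩ := hηbdd
  have hCF0 : 0 ≤ CF := (norm_nonneg _).trans (hCF 0)
  have hCη0 : 0 ≤ Cη := (norm_nonneg _).trans (hCη 0)
  have hηd : ∀ x, DifferentiableAt ℝ η x := fun x => (hη.differentiable one_ne_zero) x
  -- displacement bound for the flow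
  have hdisp : ∀ (t : ℝ) (x : E), ‖f t x - x‖ ≤ CF * |t| := by
    intro t x
    have h := Convex.norm_image_sub_le_of_norm_hasDerivWithin_le
      (f := fun τ : ℝ => f τ x) (f' := fun τ : ℝ => F (f τ x)) (C := CF)
      (fun τ _ => (hflow τ x).hasDerivWithinAt)
      (fun τ _ => hCF _) convex_univ (mem_univ 0) (mem_univ t)
    simpa [hf0, Real.norm_eq_abs] using h
  -- η is Lipschitz
  have hηlip : ∀ a b : E, |η a - η b| ≤ Cη * ‖a - b‖ := by
    intro a b
    have h := Convex.norm_image_sub_le_of_norm_fderiv_le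
      (f := η) (C := Cη) (fun x _ => hηd x) (fun x _ => hCη x)
      convex_univ (mem_univ b) (mem_univ a)
    simpa [Real.norm_eq_abs] using h
  -- trajectories are continuous in time
  have htcont : ∀ x : E, Continuous (fun τ : ℝ => f τ x) := fun x =>
    continuous_iff_continuousAt.2 fun τ => (hflow τ x).continuousAt
  -- the time-t map is continuous, for t ≥ 0
  have hcont : ∀ t : ℝ, 0 ≤ t → Continuous (f t) := by
    intro t ht
    rw [continuous_iff_continuousAt]
    intro x₀
    set R : ℝ := ‖x₀‖ + 1 + CF * t with hR
    obtain ⟨K, hK⟩ : ∃ K : NNReal, LipschitzOnWith K F (Metric.closedBall (0 : E) R) := by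
      obtain ⟨K0, hK0⟩ := (isCompact_closedBall (0 : E) R).exists_bound_of_continuousOn
        ((hF.continuous_fderiv two_ne_zero).continuousOn
          (s := Metric.closedBall (0 : E) R))
      refine ⟨⟨max K0 0, le_max_right _ _⟩, ?_⟩
      exact Convex.lipschitzOnWith_of_nnnorm_fderiv_le
        (fun x _ => (hF.differentiable two_ne_zero).differentiableAt)
        (fun x hx => by
          exact NNReal.coe_le_coe.1 ((hK0 x hx).trans (le_max_left K0 0)))
        (convex_closedBall _ _)
    -- trajectories from the unit ball around x₀ stay in the big ball
    have htraj : ∀ x ∈ Metric.closedBall x₀ 1, ∀ s ∈ Ico (0 : ℝ) t,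
        f s x ∈ Metric.closedBall (0 : E) R := by
      intro x hx s hs
      rw [Metric.mem_closedBall, dist_zero_right]
      have h1 : ‖f s x - x‖ ≤ CF * |s| := hdisp s x
      have h2 : ‖f s x‖ - ‖x‖ ≤ ‖f s x - x‖ := norm_sub_norm_le _ _
      have h3 : ‖x‖ - ‖x₀‖ ≤ ‖x - x₀‖ := norm_sub_norm_le _ _
      have h4 : ‖x - x₀‖ ≤ 1 := by
        rw [Metric.mem_closedBall] at hx; rwa [← dist_eq_norm]
      have h5 : |s| = s := abs_of_nonneg hs.1
      have h6 : CF * s ≤ CF * t := mul_le_mul_of_nonneg_left hs.2.le hCF0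
      rw [hR]; nlinarith
    -- Gronwall estimate
    have hlip : ∀ x ∈ Metric.closedBall x₀ 1, ∀ y ∈ Metric.closedBall x₀ 1,
        dist (f t x) (f t y) ≤ dist x y * Real.exp (K * t) := by
      intro x hx y hy
      have h := dist_le_of_trajectories_ODE_of_mem
        (v := fun _ : ℝ => F) (s := fun _ : ℝ => Metric.closedBall (0 : E) R)
        (fun _ _ => hK)
        (f := fun s => f s x) (g := fun s => f s y) (a := 0) (b := t)
        ((htcont x).continuousOn)
        (fun s _ => (hflow s x).hasDerivWithinAt)
        (htraj x hx)
        ((htcont y).continuousOn)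
        (fun s _ => (hflow s y).hasDerivWithinAt)
        (htraj y hy)
        (show dist (f 0 x) (f 0 y) ≤ dist x y by rw [hf0, hf0]) t (right_mem_Icc.2 ht)
      simpa using h
    have hL : LipschitzOnWith (Real.toNNReal (Real.exp (K * t))) (f t)
        (Metric.closedBall x₀ 1) := by
      apply LipschitzOnWith.of_dist_le_mul
      intro x hx y hy
      have := hlip x hx y hy
      rwa [Real.coe_toNNReal _ (Real.exp_nonneg _), mul_comm]
    exact hL.continuousOn.continuousAt (Metric.closedBall_mem_nhds x₀ one_pos)
  have hmeas : ∀ t : ℝ, 0 ≤ t → Measurable (f t) := fun t ht => (hcont t ht).measurable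
  have hmap : ∀ t : ℝ, 0 ≤ t → μ.map (f t) = μ := by
    intro t ht
    ext A hA
    rw [Measure.map_apply (hmeas t ht) hA]
    exact hinv t A hA
  -- truncation
  set φ : ℕ → ℝ → ℝ := fun N r => max (-(N : ℝ)) (min (N : ℝ) r) with hφ
  have hφcont : ∀ N, Continuous (φ N) :=
    fun N => continuous_const.max (continuous_const.min continuous_id)
  have hφbd : ∀ N (r : ℝ), |φ N r| ≤ (N : ℝ) := by
    intro N r
    rw [abs_le]
    constructor
    · exact le_max_left _ _
    · exact max_le (neg_le_self (Nat.cast_nonneg N)) ((min_le_left _ _))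
  have hφlip : ∀ N (a b : ℝ), |φ N a - φ N b| ≤ |a - b| := by
    intro N a b
    calc |φ N a - φ N b| ≤ max |(-(N:ℝ)) - (-(N:ℝ))| |min (N:ℝ) a - min (N:ℝ) b| :=
          abs_max_sub_max_le_max _ _ _ _
      _ ≤ max 0 |a - b| := by
          apply max_le_max
          · simp
          · calc |min (N:ℝ) a - min (N:ℝ) b| ≤ max |(N:ℝ) - (N:ℝ)| |a - b| :=
                abs_min_sub_min_le_max _ _ _ _
              _ ≤ |a - b| := by simp
      _ = |a - b| := max_eq_right (abs_nonneg _)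
  have hφtend : ∀ r : ℝ, Tendsto (fun N : ℕ => φ N r) atTop (𝓝 r) := by
    intro r
    apply Tendsto.congr' _ tendsto_const_nhds
    filter_upwards [eventually_ge_atTop (⌈|r|⌉₊)] with N hN
    have h1 : |r| ≤ (N : ℝ) := (Nat.ceil_le.1 le_rfl).trans (by exact_mod_cast hN)
    rw [abs_le] at h1
    rw [hφ]
    simp only
    rw [min_eq_right h1.2, max_eq_right h1.1]
  -- the integral of η ∘ f t − η vanishes for t ≥ 0
  have hS : ∀ t : ℝ, 0 ≤ t → ∫ x, (η (f t x) - η x) ∂μ = 0 := by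
    intro t ht
    have hc : Continuous fun x => η (f t x) := hη.continuous.comp (hcont t ht)
    have htrunc : ∀ N : ℕ, ∫ x, (φ N (η (f t x)) - φ N (η x)) ∂μ = 0 := by
      intro N
      have hint1 : Integrable (fun x => φ N (η (f t x))) μ :=
        (integrable_const (N : ℝ)).mono'
          (((hφcont N).comp hc).aestronglyMeasurable)
          (Eventually.of_forall fun x => by
            simpa [Real.norm_eq_abs] using hφbd N (η (f t x)))
      have hint2 : Integrable (fun x => φ N (η x)) μ :=
        (integrable_const (N : ℝ)).mono'
          (((hφcont N).comp hη.continuous).aestronglyMeasurable)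
          (Eventually.of_forall fun x => by
            simpa [Real.norm_eq_abs] using hφbd N (η x))
      have h1 : ∫ x, φ N (η (f t x)) ∂μ = ∫ x, φ N (η x) ∂μ := by
        conv_rhs => rw [← hmap t ht]
        rw [integral_map (f := fun y => φ N (η y)) (hmeas t ht).aemeasurable
          (by exact ((hφcont N).comp hη.continuous).aestronglyMeasurable)]
      rw [integral_sub hint1 hint2, h1, sub_self]
    have hlim : Tendsto (fun N : ℕ => ∫ x, (φ N (η (f t x)) - φ N (η x)) ∂μ) atTop
        (𝓝 (∫ x, (η (f t x) - η x) ∂μ)) := by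
      apply tendsto_integral_of_dominated_convergence (bound := fun _ => Cη * (CF * |t|))
      · exact fun N => (((hφcont N).comp hc).sub
          ((hφcont N).comp hη.continuous)).aestronglyMeasurable
      · exact integrable_const _
      · intro N
        apply Eventually.of_forall
        intro x
        rw [Real.norm_eq_abs]
        calc |φ N (η (f t x)) - φ N (η x)| ≤ |η (f t x) - η x| := hφlip N _ _
          _ ≤ Cη * ‖f t x - x‖ := hηlip _ _
          _ ≤ Cη * (CF * |t|) := mul_le_mul_of_nonneg_left (hdisp t x) hCη0
      · exact Eventually.of_forall fun x =>
          (hφtend (η (f t x))).sub (hφtend (η x))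
    have hlim0 : Tendsto (fun N : ℕ => ∫ x, (φ N (η (f t x)) - φ N (η x)) ∂μ) atTop
        (𝓝 0) := by
      simp only [htrunc]; exact tendsto_const_nhds
    exact (tendsto_nhds_unique hlim hlim0)
  -- final limit argument
  have hpos : ∀ n : ℕ, (0 : ℝ) < 1 / (n + 1) := fun n => by positivity
  have key : Tendsto (fun n : ℕ => ∫ x, (η (f (1 / ((n : ℝ) + 1)) x) - η x) / (1 / ((n : ℝ) + 1)) ∂μ)
      atTop (𝓝 (∫ x, fderiv ℝ η x (F x) ∂μ)) := by
    apply tendsto_integral_of_dominated_convergence (bound := fun _ => Cη * CF)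
    · intro n
      exact (((hη.continuous.comp (hcont _ (hpos n).le)).sub hη.continuous).div_const
        _).aestronglyMeasurable
    · exact integrable_const _
    · intro n
      apply Eventually.of_forall
      intro x
      rw [Real.norm_eq_abs, abs_div]
      rw [div_le_iff₀ (abs_pos.2 (hpos n).ne')]
      calc |η (f (1 / ((n : ℝ) + 1)) x) - η x| ≤ Cη * ‖f (1 / ((n : ℝ) + 1)) x - x‖ :=
            hηlip _ _
        _ ≤ Cη * (CF * |1 / ((n : ℝ) + 1)|) :=
            mul_le_mul_of_nonneg_left (hdisp _ x) hCη0
        _ = Cη * CF * |1 / ((n : ℝ) + 1)| := by ring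
    · apply Eventually.of_forall
      intro x
      have hdx : HasDerivAt (fun τ : ℝ => η (f τ x)) (fderiv ℝ η x (F x)) 0 := by
        have h1 := (hηd (f 0 x)).hasFDerivAt.comp_hasDerivAt 0 (hflow 0 x)
        rw [hf0 x] at h1; exact h1
      have hslope := hasDerivAt_iff_tendsto_slope.1 hdx
      have htn : Tendsto (fun n : ℕ => 1 / ((n : ℝ) + 1)) atTop (𝓝[≠] 0) := by
        apply tendsto_nhdsWithin_of_tendsto_nhds_of_eventually_within
        · exact tendsto_one_div_add_atTop_nhds_zero_nat
        · exact Eventually.of_forall fun n => (hpos n).ne'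
      have := hslope.comp htn
      apply this.congr
      intro n
      simp only [Function.comp_apply, slope_def_field, hf0 x, sub_zero]
  have hz : ∀ n : ℕ, ∫ x, (η (f (1 / ((n : ℝ) + 1)) x) - η x) / (1 / ((n : ℝ) + 1)) ∂μ = 0 := by
    intro n
    rw [integral_div, hS _ (hpos n).le, zero_div]
  simp only [hz] at key
  exact tendsto_nhds_unique key tendsto_const_nhds
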